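/- If 0 < p* < 1, 0 < p_w ≤ 1, b* ≥ 1, and p_w ≤ (1 − p*·b*)/(1 − p*) with p*·b* < 1, then (1−p_w)·p*·b* + p_w ≥ 3·p*·p_w·(b* − 1); equivalently g ≥ 3f where g = (1−p_w)p*b* + p_w and f = p*p_w(b*−1). -/
import Mathlib


theorem stmt18 (ps pw bs : ℝ)
    (hps0 : 0 < ps) (hps1 : ps < 1) (hpw0 : 0 < pw) (hpw1 : pw ≤ 1)
    (hbs : 1 ≤ bs) (hpsbs : ps * bs < 1)
    (hpw : pw ≤ (1 - ps * bs) / (1 - ps)) :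
    3 * (ps * pw * (bs - 1)) ≤ (1 - pw) * ps * bs + pw := by
  have h1 : (0:ℝ) < 1 - ps := by linarith
  have h2 : pw * (1 - ps) ≤ 1 - ps * bs := by
    rw [← le_div_iff₀ h1]; exact hpw
  rcases le_or_gt pw (1/4) with h | h
  · nlinarith [mul_nonneg (mul_nonneg hps0.le (by linarith : (0:ℝ) ≤ bs)) (by linarith : (0:ℝ) ≤ 1 - 4*pw)]
  · nlinarith [mul_nonneg (by linarith : (0:ℝ) ≤ 4*pw - 1) (sub_nonneg.2 h2),
      sq_nonneg (1 - 2*pw), mul_nonneg (mul_nonneg hps0.le hpw0.le) (by linarith : (0:ℝ) ≤ 1 - pw)]
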